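/- arXiv:2102.01561 — 7 statements merged into one kernel-verified Lean document; each statement's English description precedes it below -/
import Mathlib

section
/- The square root of 2 is positively irrational: for all natural numbers m and n with n > 0, |√2 − m/n| > 1/(4·n²). -/
theorem sqrt_two_positively_irrational (m n : ℕ) (hn : 0 < n) :
    |Real.sqrt 2 - (m : ℝ) / (n : ℝ)| > 1 / (4 * (n : ℝ) ^ 2) := by
  have hn' : (0:ℝ) < n := by exact_mod_cast hn
  set q : ℝ := (m : ℝ) / n with hq
  have hq0 : 0 ≤ q := by positivity
  have hs2 : Real.sqrt 2 ^ 2 = 2 := Real.sq_sqrt (by norm_num)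
  have hs0 : 0 ≤ Real.sqrt 2 := Real.sqrt_nonneg 2
  have hslt : Real.sqrt 2 < 1.5 := by nlinarith
  have hsgt : 1 < Real.sqrt 2 := by nlinarith
  -- integer nonvanishing
  have hne : (2 * (n:ℤ)^2 - (m:ℤ)^2) ≠ 0 := by
    intro h
    have hm2 : ((m:ℤ))^2 = 2 * (n:ℤ)^2 := by linarith
    have hq2 : q ^ 2 = 2 := by
      rw [hq]
      field_simp
      exact_mod_cast hm2.trans (mul_comm _ _)
    have hs : Real.sqrt 2 = q := by
      rw [← hq2, Real.sqrt_sq hq0]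
    exact irrational_sqrt_two ⟨(m:ℚ)/(n:ℚ), by rw [hs, hq]; push_cast; ring⟩
  have h1 : (1:ℝ) ≤ |2 * (n:ℝ)^2 - (m:ℝ)^2| := by
    have := Int.one_le_abs hne
    have : ((1:ℤ):ℝ) ≤ (|2 * (n:ℤ)^2 - (m:ℤ)^2| : ℝ) := by exact_mod_cast this
    simpa [Int.cast_abs] using this
  have hkey : |Real.sqrt 2 - q| * (Real.sqrt 2 + q) ≥ 1 / (n:ℝ)^2 := by
    have hpos : 0 < Real.sqrt 2 + q := by linarith
    have : |Real.sqrt 2 - q| * (Real.sqrt 2 + q) = |2 - q^2| := by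
      rw [← abs_of_pos hpos, ← abs_mul]
      congr 1
      nlinarith
    rw [this]
    have hq2 : q ^ 2 = (m:ℝ)^2 / (n:ℝ)^2 := by rw [hq]; field_simp
    have : |2 - q^2| = |2 * (n:ℝ)^2 - (m:ℝ)^2| / (n:ℝ)^2 := by
      rw [hq2, show (2:ℝ) - (m:ℝ)^2/(n:ℝ)^2 = (2*(n:ℝ)^2-(m:ℝ)^2)/(n:ℝ)^2 from by
        field_simp, abs_div, abs_of_pos (by positivity : (0:ℝ) < (n:ℝ)^2)]
    rw [this]
    apply div_le_div_of_nonneg_right h1 (by positivity) |>.trans_eq rfl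
  by_cases hle : q ≤ 2
  · have hlt4 : Real.sqrt 2 + q < 4 := by linarith
    have habs : 0 ≤ |Real.sqrt 2 - q| := abs_nonneg _
    have hd : 0 < |Real.sqrt 2 - q| := by
      nlinarith [hkey, (by positivity : (0:ℝ) < 1/(n:ℝ)^2)]
    rw [gt_iff_lt, div_lt_iff₀ (by positivity)]
    have hn2 : (0:ℝ) < (n:ℝ)^2 := by positivity
    have h5 : |Real.sqrt 2 - q| * (Real.sqrt 2 + q) * (n:ℝ)^2 ≥ 1 := by
      rw [ge_iff_le, ← div_le_iff₀ hn2]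
      exact hkey
    nlinarith [mul_pos hd hn2]
  · push_neg at hle
    have : 0.5 < |Real.sqrt 2 - q| := by
      rw [abs_sub_comm, abs_of_pos (by linarith)]
      linarith
    have hn1 : (1:ℝ) ≤ n := by exact_mod_cast hn
    have : 1 / (4 * (n:ℝ)^2) ≤ 1/4 := by
      apply div_le_div_of_nonneg_left (by norm_num) (by norm_num)
      nlinarith
    linarith
end

section
/- Monotone Bar Induction for Baire space (classical form): let B and C be sets of finite sequences of natural numbers such that (1) every α : ℕ → ℕ has some initial segment in B, (2) B ⊆ C, and (3) for every finite sequence s, s ∈ C if and only if s⟨n⟩ ∈ C for all n (where s⟨n⟩ is s extended by n). Then the empty sequence is in C. -/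
theorem monotone_bar_induction (B C : Set (List ℕ))
    (hbar : ∀ α : ℕ → ℕ, ∃ n : ℕ, (List.ofFn fun i : Fin n => α i) ∈ B)
    (hBC : B ⊆ C)
    (hind : ∀ s : List ℕ, s ∈ C ↔ ∀ n : ℕ, s ++ [n] ∈ C) :
    ([] : List ℕ) ∈ C := by
  by_contra h0
  have step : ∀ t : List ℕ, t ∉ C → ∃ n : ℕ, t ++ [n] ∉ C := by
    intro t ht
    by_contra h
    push_neg at h
    exact ht ((hind t).2 h)
  -- recursively build a bad sequence
  let f : {t : List ℕ // t ∉ C} → {t : List ℕ // t ∉ C} := fun t =>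
    ⟨t.1 ++ [Classical.choose (step t.1 t.2)], Classical.choose_spec (step t.1 t.2)⟩
  let s : ℕ → {t : List ℕ // t ∉ C} := fun n => f^[n] ⟨[], h0⟩
  have hs : ∀ n, s (n + 1) = f (s n) := by
    intro n
    simp only [s, Function.iterate_succ_apply']
  let α : ℕ → ℕ := fun n => Classical.choose (step (s n).1 (s n).2)
  have key : ∀ n, (s n).1 = List.ofFn fun i : Fin n => α i := by
    intro n
    induction n with
    | zero => simp [s]
    | succ n ih =>
      rw [hs n]
      show (s n).1 ++ [α n] = _
      rw [ih, List.ofFn_succ', List.concat_eq_append]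

  obtain ⟨n, hn⟩ := hbar α
  exact (s n).2 (key n ▸ hBC hn)
end

section
/- Principle of Open Induction on [0,1]: if G is an open subset of ℝ that is progressive in [0,1], meaning that for every x ∈ [0,1], the inclusion [0,x) ⊆ G implies x ∈ G, then [0,1] ⊆ G. -/
theorem open_induction_unit_interval (G : Set ℝ) (hG : IsOpen G)
    (hprog : ∀ x ∈ Set.Icc (0 : ℝ) 1, Set.Ico (0 : ℝ) x ⊆ G → x ∈ G) :
    Set.Icc (0 : ℝ) 1 ⊆ G := by
  set T : Set ℝ := {x | x ∈ Set.Icc (0:ℝ) 1 ∧ Set.Icc (0:ℝ) x ⊆ G} with hT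
  have h0G : (0:ℝ) ∈ G := by
    apply hprog 0 (by norm_num)
    intro y hy
    exact absurd hy.2 (not_lt.mpr hy.1)
  have h0T : (0:ℝ) ∈ T := by
    refine ⟨by norm_num, ?_⟩
    intro y hy
    have : y = 0 := le_antisymm hy.2 hy.1
    simpa [this] using h0G
  have hbdd : BddAbove T := ⟨1, fun x hx => hx.1.2⟩
  set s := sSup T with hs
  have hsT : 0 ≤ s := le_csSup hbdd h0T
  have hs1 : s ≤ 1 := csSup_le ⟨0, h0T⟩ fun x hx => hx.1.2
  have hIco : Set.Ico (0:ℝ) s ⊆ G := by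
    intro y hy
    obtain ⟨t, htT, hyt⟩ := exists_lt_of_lt_csSup ⟨0, h0T⟩ hy.2
    exact htT.2 ⟨hy.1, hyt.le⟩
  have hsG : s ∈ G := hprog s ⟨hsT, hs1⟩ hIco
  have hIcc : Set.Icc (0:ℝ) s ⊆ G := by
    intro y hy
    rcases lt_or_eq_of_le hy.2 with h | h
    · exact hIco ⟨hy.1, h⟩
    · rw [h]; exact hsG
  have hs_eq : s = 1 := by
    by_contra hne
    have hlt : s < 1 := lt_of_le_of_ne hs1 hne
    obtain ⟨ε, hε, hball⟩ := Metric.isOpen_iff.mp hG s hsG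
    set t := min 1 (s + ε / 2) with ht
    have hst : s < t := lt_min hlt (by linarith)
    have htT : t ∈ T := by
      refine ⟨⟨le_trans hsT hst.le, min_le_left _ _⟩, ?_⟩
      intro y hy
      rcases le_or_gt y s with h | h
      · exact hIcc ⟨hy.1, h⟩
      · apply hball
        simp only [Metric.mem_ball, Real.dist_eq, abs_lt]
        have : y ≤ s + ε / 2 := le_trans hy.2 (min_le_right _ _)
        constructor <;> linarith
    exact absurd (le_csSup hbdd htT) (not_le.mpr hst)
  intro x hx
  exact hIcc ⟨hx.1, hs_eq ▸ hx.2⟩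
end

section
/- Intuitionistic Ramsey Theorem in finite dimension k (classical reading): for every k > 0 and all sets A, B of strictly increasing k-tuples of natural numbers, if A and B are both almost-full, then A ∩ B is almost-full. Here a set X of strictly increasing k-tuples is almost-full if for every strictly increasing ζ : ℕ → ℕ there exists a strictly increasing k-tuple s of natural numbers with (ζ(s(0)), ..., ζ(s(k−1))) ∈ X. -/
def AlmostFull (k : ℕ) (X : Set (Fin k → ℕ)) : Prop :=
  ∀ ζ : ℕ → ℕ, StrictMono ζ →
    ∃ s : Fin k → ℕ, StrictMono s ∧ (fun i => ζ (s i)) ∈ X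

open Classical in
theorem ramsey_aux : ∀ (k : ℕ) (C : Type) [Fintype C] [Nonempty C]
    (c : (Fin k → ℕ) → C),
    ∃ ζ : ℕ → ℕ, StrictMono ζ ∧ ∃ a : C,
      ∀ s : Fin k → ℕ, StrictMono s → c (fun i => ζ (s i)) = a := by
  intro k
  induction k with
  | zero =>
    intro C _ _ c
    exact ⟨id, strictMono_id, c (fun i => i.elim0),
      fun s _ => congrArg c (Subsingleton.elim _ _)⟩
  | succ k ih =>
    intro C _ _ c
    have step : ∀ η : ℕ → ℕ, StrictMono η → ∃ θ : ℕ → ℕ, StrictMono θ ∧ ∃ a : C,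
        ∀ t : Fin k → ℕ, StrictMono t →
          c (Fin.cons (η 0) (fun i => η (θ (t i) + 1))) = a := by
      intro η hη
      obtain ⟨θ, hθ, a, ha⟩ := ih C (fun t => c (Fin.cons (η 0) (fun i => η (t i + 1))))
      exact ⟨θ, hθ, a, fun t ht => ha t ht⟩
    choose θf hθf af haf using step
    -- the iterated refinement
    let next : {f : ℕ → ℕ // StrictMono f} → {f : ℕ → ℕ // StrictMono f} :=
      fun η => ⟨fun m => η.1 (θf η.1 η.2 m + 1), η.2.comp ((hθf η.1 η.2).add_const 1)⟩
    let F : ℕ → {f : ℕ → ℕ // StrictMono f} := fun n => next^[n] ⟨id, strictMono_id⟩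
    have hFsucc : ∀ n m, (F (n+1)).1 m = (F n).1 (θf (F n).1 (F n).2 m + 1) := by
      intro n m
      show ((next^[n+1]) ⟨id, strictMono_id⟩).1 m = _
      rw [Function.iterate_succ_apply']
    set x : ℕ → ℕ := fun n => (F n).1 0 with hx
    set a : ℕ → C := fun n => af (F n).1 (F n).2 with ha
    have hxmono : StrictMono x := by
      apply strictMono_nat_of_lt_succ
      intro n
      have : (F (n+1)).1 0 = (F n).1 (θf (F n).1 (F n).2 0 + 1) := hFsucc n 0
      rw [hx]; simp only; rw [this]
      exact (F n).2 (Nat.succ_pos _)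
    -- x m is in the range of (F n).1 for n ≤ m
    have hrange : ∀ j n, ∃ p, x (n + j) = (F n).1 p := by
      intro j
      induction j with
      | zero => exact fun n => ⟨0, rfl⟩
      | succ j ihj =>
        intro n
        obtain ⟨p, hp⟩ := ihj (n + 1)
        refine ⟨θf (F n).1 (F n).2 p + 1, ?_⟩
        have : n + (j + 1) = (n + 1) + j := by omega
        rw [this, hp, hFsucc]
    have hrange' : ∀ n m, n ≤ m → ∃ p, x m = (F n).1 p := by
      intro n m h
      obtain ⟨p, hp⟩ := hrange (m - n) n
      exact ⟨p, by rwa [Nat.add_sub_cancel' h] at hp⟩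
    -- key homogeneity along x
    have key : ∀ s : Fin (k+1) → ℕ, StrictMono s → c (fun i => x (s i)) = a (s 0) := by
      intro s hs
      set n := s 0 with hn
      have hge : ∀ i : Fin k, n + 1 ≤ s i.succ := by
        intro i
        have : s 0 < s i.succ := hs (Fin.succ_pos i)
        omega
      choose t ht using fun i : Fin k => hrange' (n+1) (s i.succ) (hge i)
      have htmono : StrictMono t := by
        intro i j hij
        have h1 : x (s i.succ) < x (s j.succ) := hxmono (hs (Fin.succ_lt_succ_iff.mpr hij))
        rw [ht i, ht j] at h1
        exact (F (n+1)).2.lt_iff_lt.mp h1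
      have h2 := haf (F n).1 (F n).2 t htmono
      have h3 : (fun i => x (s i)) =
          Fin.cons ((F n).1 0) (fun i => (F n).1 (θf (F n).1 (F n).2 (t i) + 1)) := by
        funext i
        refine Fin.cases ?_ ?_ i
        · rfl
        · intro j
          simp only [Fin.cons_succ]
          rw [← hFsucc, ← ht j]
      rw [h3, h2]
    -- pigeonhole: some color occurs infinitely often
    obtain ⟨a0, ha0⟩ := Finite.exists_infinite_fiber a
    have hinf : (a ⁻¹' {a0}).Infinite := Set.infinite_coe_iff.mp ha0
    haveI : Infinite (a ⁻¹' {a0}) := ha0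
    let e := Nat.orderEmbeddingOfSet (a ⁻¹' {a0})
    have hemem : ∀ m, e m ∈ a ⁻¹' {a0} := by
      intro m
      have : e m ∈ Set.range e := Set.mem_range_self m
      rwa [Nat.orderEmbeddingOfSet_range] at this
    refine ⟨fun m => x (e m), hxmono.comp e.strictMono, a0, ?_⟩
    intro s hsm
    have := key (fun i => e (s i)) (e.strictMono.comp hsm)
    rw [this]
    exact hemem (s 0)

theorem intuitionistic_ramsey (k : ℕ) (hk : 0 < k) (A B : Set (Fin k → ℕ))
    (hA : AlmostFull k A) (hB : AlmostFull k B) :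
    AlmostFull k (A ∩ B) := by
  intro ζ hζ
  classical
  obtain ⟨η, hη, ⟨pA, pB⟩, hcol⟩ := ramsey_aux k (Bool × Bool)
    (fun t => (decide ((fun i => ζ (t i)) ∈ A), decide ((fun i => ζ (t i)) ∈ B)))
  obtain ⟨sA, hsA, hmemA⟩ := hA (ζ ∘ η) (hζ.comp hη)
  obtain ⟨sB, hsB, hmemB⟩ := hB (ζ ∘ η) (hζ.comp hη)
  have hA' := hcol sA hsA
  have hB' := hcol sB hsB
  have hpA : pA = true := by
    have := congrArg Prod.fst hA'
    simp only at this
    rw [← this]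
    exact decide_eq_true hmemA
  have hpB : pB = true := by
    have := congrArg Prod.snd hB'
    simp only at this
    rw [← this]
    exact decide_eq_true hmemB
  refine ⟨fun i => η i.val, hη.comp (fun i j h => h), ?_⟩
  have h := hcol (fun i : Fin k => (i : ℕ)) (fun i j h => h)
  constructor
  · have := congrArg Prod.fst h
    simp only [hpA] at this
    exact of_decide_eq_true this
  · have := congrArg Prod.snd h
    simp only [hpB] at this
    exact of_decide_eq_true this
end

section
/- Extended Finite Ramsey Theorem (Paris–Harrington): for all positive integers k, r, n there exists M such that for every coloring c of the strictly increasing k-tuples from {0,...,M−1} with r colors, there exist p ≥ n and a strictly increasing p-tuple t of numbers below M with t(0) = p such that all strictly increasing k-tuples drawn from the range of t receive the same color under c. -/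
open Set Filter

private lemma ph_fiber_infinite {r : ℕ} (f : ℕ → Fin r) (S : Set ℕ) (hS : S.Infinite) :
    ∃ j, {x | x ∈ S ∧ f x = j}.Infinite := by
  by_contra h
  push_neg at h
  have hsub : S ⊆ ⋃ j : Fin r, {x | x ∈ S ∧ f x = j} :=
    fun x hx => Set.mem_iUnion.2 ⟨f x, hx, rfl⟩
  exact hS ((Set.finite_iUnion h).subset hsub)

/-- Infinite Ramsey theorem over subsets of ℕ. -/
private lemma ph_ramsey_inf : ∀ (k r : ℕ) (C : (Fin k → ℕ) → Fin r) (S : Set ℕ), S.Infinite →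
    ∃ H, H ⊆ S ∧ H.Infinite ∧ ∃ j, ∀ s : Fin k → ℕ, StrictMono s → (∀ i, s i ∈ H) → C s = j := by
  intro k
  induction k with
  | zero =>
    intro r C S hS
    refine ⟨S, subset_rfl, hS, C (fun i => i.elim0), fun s _ _ => ?_⟩
    congr 1
    funext i
    exact i.elim0
  | succ k IH =>
    intro r C S hS
    have key : ∀ T : Set ℕ, T.Infinite → ∃ H : Set ℕ, H ⊆ T ∧ H.Infinite ∧
        (∀ x ∈ H, sInf T < x) ∧ ∃ j, ∀ s : Fin k → ℕ, StrictMono s → (∀ i, s i ∈ H) →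
          C (Fin.cons (sInf T) s) = j := by
      intro T hT
      have hinf : ({x | x ∈ T ∧ sInf T < x} : Set ℕ).Infinite := by
        refine (hT.diff (Set.finite_Iic (sInf T))).mono ?_
        intro x hx
        exact ⟨hx.1, not_le.1 hx.2⟩
      obtain ⟨H, hHsub, hHinf, j, hj⟩ :=
        IH r (fun s => C (Fin.cons (sInf T) s)) {x | x ∈ T ∧ sInf T < x} hinf
      exact ⟨H, fun x hx => (hHsub hx).1, hHinf, fun x hx => (hHsub hx).2, j, hj⟩
    choose next hsub hinf hgt js hhom using key
    let seq : ℕ → {T : Set ℕ // T.Infinite} :=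
      fun i => i.rec ⟨S, hS⟩ (fun _ p => ⟨next p.1 p.2, hinf p.1 p.2⟩)
    have seq_succ : ∀ i, (seq (i+1)).1 = next (seq i).1 (seq i).2 := fun i => rfl
    set A : ℕ → ℕ := fun i => sInf (seq i).1 with hA
    have hAmem : ∀ i, A i ∈ (seq i).1 := fun i => Nat.sInf_mem (seq i).2.nonempty
    have hchain : ∀ i m, i ≤ m → (seq m).1 ⊆ (seq i).1 := by
      intro i m him
      induction m with
      | zero => rw [Nat.le_zero.1 him]
      | succ m ih =>
        rcases Nat.lt_or_ge i (m+1) with h | h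
        · exact subset_trans (hsub (seq m).1 (seq m).2) (ih (Nat.lt_succ_iff.1 h))
        · rw [Nat.le_antisymm him h]
    have hAgt : ∀ i m, i < m → A m ∈ (seq (i+1)).1 :=
      fun i m him => hchain (i+1) m him (hAmem m)
    have hAsm : StrictMono A := fun i m him => hgt (seq i).1 (seq i).2 (A m) (hAgt i m him)
    obtain ⟨j, hI⟩ := ph_fiber_infinite (fun i => js (seq i).1 (seq i).2) Set.univ
      Set.infinite_univ
    set I : Set ℕ := {i | i ∈ Set.univ ∧ js (seq i).1 (seq i).2 = j} with hIdef
    refine ⟨A '' I, ?_, ?_, j, ?_⟩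
    · rintro x ⟨i, _, rfl⟩
      exact hchain 0 i (Nat.zero_le i) (hAmem i)
    · exact hI.image (hAsm.injective.injOn)
    · intro s hs hmem
      choose idx hidxI hidxA using fun m => hmem m
      have hidxsm : StrictMono idx := by
        intro a b hab
        have : A (idx a) < A (idx b) := by rw [hidxA, hidxA]; exact hs hab
        exact hAsm.lt_iff_lt.1 this
      have hs0 : s 0 = A (idx 0) := (hidxA 0).symm
      have htail : ∀ m : Fin k, s m.succ ∈ next (seq (idx 0)).1 (seq (idx 0)).2 := by
        intro m
        rw [← seq_succ]
        rw [← hidxA m.succ]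
        exact hAgt (idx 0) (idx m.succ) (hidxsm (Fin.succ_pos m))
      have htailsm : StrictMono (fun m : Fin k => s m.succ) :=
        fun a b hab => hs (Fin.succ_lt_succ_iff.2 hab)
      have := hhom (seq (idx 0)).1 (seq (idx 0)).2 (fun m => s m.succ) htailsm htail
      have hcons : Fin.cons (sInf (seq (idx 0)).1) (fun m => s m.succ) = s := by
        rw [show sInf (seq (idx 0)).1 = s 0 from hs0.symm]
        exact Fin.cons_self_tail s
      rw [hcons] at this
      rw [this]
      exact (hidxI 0).2

private lemma ph_exists_fiber_mem {r : ℕ} (U : Ultrafilter ℕ) (f : ℕ → Fin r) :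
    ∃ j, {M | f M = j} ∈ U := by
  by_contra h
  push_neg at h
  have h2 : ∀ j, {M | f M = j}ᶜ ∈ U := fun j => Ultrafilter.compl_mem_iff_notMem.2 (h j)
  have h3 : (⋂ j, {M | f M = j}ᶜ) ∈ U := (Filter.iInter_mem).2 h2
  have h4 : (⋂ j, {M | f M = j}ᶜ) = (∅ : Set ℕ) :=
    Set.eq_empty_iff_forall_notMem.2 fun M hM => (Set.mem_iInter.1 hM (f M)) rfl
  rw [h4] at h3
  exact Filter.empty_notMem (U : Filter ℕ) h3

theorem paris_harrington (k r n : ℕ) (hk : 0 < k) (hr : 0 < r) (hn : 0 < n) :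
    ∃ M : ℕ, ∀ c : (Fin k → Fin M) → Fin r,
      ∃ p : ℕ, ∃ hnp : n ≤ p, ∃ t : Fin p → Fin M, StrictMono t ∧
        ((t ⟨0, lt_of_lt_of_le hn hnp⟩ : Fin M) : ℕ) = p ∧
        ∃ j : Fin r, ∀ u : Fin k → Fin p, StrictMono u →
          c (fun i => t (u i)) = j := by
  by_contra hcon
  push_neg at hcon
  choose c hc using hcon
  set U := hyperfilter ℕ with hU
  set g : (Fin k → ℕ) → ℕ → Fin r := fun s M =>
    if h : ∀ i, s i < M then c M (fun i => ⟨s i, h i⟩) else ⟨0, hr⟩ with hg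
  choose C hCmem using fun s => ph_exists_fiber_mem U (g s)
  obtain ⟨H, _, hHinf, j, hj⟩ := ph_ramsey_inf k r C Set.univ Set.infinite_univ
  obtain ⟨p, hpH, hpn⟩ := hHinf.exists_gt n
  choose nf hnfH hnflt using fun x : ℕ => hHinf.exists_gt x
  set f : ℕ → ℕ := fun i => i.rec p (fun _ prev => nf prev) with hfdef
  have hfsm : StrictMono f := strictMono_nat_of_lt_succ (fun i => hnflt (f i))
  have hfH : ∀ i, f i ∈ H := by
    intro i
    induction i with
    | zero => exact hpH
    | succ i _ => exact hnfH (f i)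
  set A' : Set ℕ := ⋂ (u : {u : Fin k → Fin p // StrictMono u}),
    {M | g (fun i => f (u.1 i)) M = j} with hA'
  have hA'mem : A' ∈ U := by
    refine (Filter.iInter_mem).2 fun u => ?_
    have hsm : StrictMono (fun i => f ((u.1 i : Fin p) : ℕ)) :=
      fun a b hab => hfsm (u.2 hab)
    have := hj (fun i => f (u.1 i)) hsm (fun i => hfH _)
    have hmem := hCmem (fun i => f (u.1 i))
    rwa [this] at hmem
  have hA'inf : A'.Infinite := by
    by_contra hfin
    exact (Set.not_infinite.1 hfin).notMem_hyperfilter hA'mem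
  obtain ⟨M, hMA, hMgt⟩ := hA'inf.exists_gt (f p)
  have hbound : ∀ i : Fin p, f (i : ℕ) < M :=
    fun i => lt_trans (hfsm i.2) hMgt
  set t : Fin p → Fin M := fun i => ⟨f i, hbound i⟩ with ht
  have htsm : StrictMono t := fun a b hab => hfsm hab
  obtain ⟨u, hu, hne⟩ := hc M p (le_of_lt hpn) t htsm rfl j
  refine hne ?_
  have huval : ∀ i, (fun i => f ((u i : Fin p) : ℕ)) i < M := fun i => hbound (u i)
  have : c M (fun i => t (u i)) = g (fun i => f (u i)) M := by
    rw [hg]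
    simp only []
    rw [dif_pos huval]
  rw [this]
  exact Set.mem_iInter.1 hMA ⟨u, hu⟩
end

section
/- Diagonal fixed-point for continuous self-maps of Baire space: for every continuous φ : (ℕ → ℕ) → (ℕ → ℕ) there exists α : ℕ → ℕ such that for every m, the m-th subsequence of α has a nonzero value if and only if the m-th subsequence of φ(α) has a nonzero value; consequently (∀m ∃n, α^m(n) ≠ 0) ↔ (∀m ∃n, (φ α)^m(n) ≠ 0). -/
open Classical

noncomputable section

namespace DFP

variable (φ : (ℕ → ℕ) → (ℕ → ℕ))

/-- A modulus of continuity for `β ↦ φ β k` at `f`. -/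
def modφ (f : ℕ → ℕ) (k : ℕ) : ℕ :=
  if h : ∃ N, ∀ β : ℕ → ℕ, (∀ i < N, β i = f i) → φ β k = φ f k then h.choose else 0

lemma exists_mod (hφ : Continuous φ) (f : ℕ → ℕ) (k : ℕ) :
    ∃ N, ∀ β : ℕ → ℕ, (∀ i < N, β i = f i) → φ β k = φ f k := by
  have hg : Continuous fun β : ℕ → ℕ => φ β k := (continuous_apply k).comp hφ
  have hopen : IsOpen ((fun β : ℕ → ℕ => φ β k) ⁻¹' {φ f k}) :=
    hg.isOpen_preimage _ (isOpen_discrete _)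
  rw [isOpen_pi_iff] at hopen
  obtain ⟨I, u, hu, hsub⟩ := hopen f rfl
  refine ⟨I.sup id + 1, fun β hβ => ?_⟩
  have hmem : β ∈ (I : Set ℕ).pi u := by
    intro i hi
    have hlt : i < I.sup id + 1 := Nat.lt_succ_of_le (Finset.le_sup (f := id) hi)
    rw [hβ i hlt]
    exact (hu i hi).2
  exact hsub hmem

lemma modφ_spec (hφ : Continuous φ) (f : ℕ → ℕ) (k : ℕ) (β : ℕ → ℕ)
    (hβ : ∀ i < modφ φ f k, β i = f i) : φ β k = φ f k := by
  have h := exists_mod φ hφ f k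
  rw [modφ, dif_pos h] at hβ
  exact h.choose_spec β hβ

def Elig (f : ℕ → ℕ) (A : Set ℕ) (m : ℕ) : Prop :=
  m ∉ A ∧ ∃ k, (∃ n, k + 1 = 2 ^ n * (2 * m + 1)) ∧ φ f k ≠ 0

abbrev State := (ℕ → ℕ) × ℕ × Set ℕ

def act (s : ℕ) (S : State) (m0 k0 : ℕ) : State :=
  (Function.update S.1 (2 ^ max (modφ φ S.1 k0) S.2.1 * (2 * m0 + 1) - 1) 1,
   max (max (S.2.1 + 1) (2 ^ max (modφ φ S.1 k0) S.2.1 * (2 * m0 + 1) - 1 + 1))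
       (max (modφ φ S.1 k0) (s + 1)),
   insert m0 S.2.2)

def step (s : ℕ) (S : State) : State :=
  if h : ∃ m, Elig φ S.1 S.2.2 m then
    act φ s S (Nat.find h) ((Nat.find_spec h).2).choose
  else (S.1, max (S.2.1 + 1) (s + 1), S.2.2)

def st : ℕ → State
  | 0 => (fun _ => 0, 0, ∅)
  | s + 1 => step φ s (st s)

def α : ℕ → ℕ := fun i => (st φ (i + 1)).1 i

lemma pow_ge (e : ℕ) : e ≤ 2 ^ e := Nat.le_of_lt (Nat.lt_two_pow_self (n := e))

lemma c_ge (e m0 : ℕ) : e ≤ 2 ^ e * (2 * m0 + 1) - 1 := by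
  have h1 : e < 2 ^ e := Nat.lt_two_pow_self (n := e)
  have h2 : 2 ^ e ≤ 2 ^ e * (2 * m0 + 1) := Nat.le_mul_of_pos_right _ (by omega)
  omega

lemma c_succ (e m0 : ℕ) : (2 ^ e * (2 * m0 + 1) - 1) + 1 = 2 ^ e * (2 * m0 + 1) := by
  have h1 : 0 < 2 ^ e := Nat.pow_pos (by norm_num)
  have h2 : 0 < 2 ^ e * (2 * m0 + 1) := Nat.mul_pos h1 (by omega)
  omega

/-- Everything the step does, in usable form. -/
lemma step_spec (s : ℕ) :
    ((¬ ∃ m, Elig φ (st φ s).1 (st φ s).2.2 m) ∧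
      (st φ (s + 1)).1 = (st φ s).1 ∧ (st φ (s + 1)).2.2 = (st φ s).2.2) ∨
    (∃ m0 k0 c,
      m0 ∉ (st φ s).2.2 ∧
      (∃ n, k0 + 1 = 2 ^ n * (2 * m0 + 1)) ∧
      φ (st φ s).1 k0 ≠ 0 ∧
      (∃ n0, c + 1 = 2 ^ n0 * (2 * m0 + 1)) ∧
      modφ φ (st φ s).1 k0 ≤ c ∧ (st φ s).2.1 ≤ c ∧
      (st φ (s + 1)).1 = Function.update (st φ s).1 c 1 ∧
      (st φ (s + 1)).2.2 = insert m0 (st φ s).2.2 ∧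
      c + 1 ≤ (st φ (s + 1)).2.1 ∧ modφ φ (st φ s).1 k0 ≤ (st φ (s + 1)).2.1 ∧
      (∀ m, Elig φ (st φ s).1 (st φ s).2.2 m → m0 ≤ m)) := by
  have hst : st φ (s + 1) = step φ s (st φ s) := rfl
  by_cases h : ∃ m, Elig φ (st φ s).1 (st φ s).2.2 m
  · right
    set f := (st φ s).1
    set b := (st φ s).2.1
    set A := (st φ s).2.2
    have hact : st φ (s + 1) = act φ s (st φ s) (Nat.find h) ((Nat.find_spec h).2).choose := by
      rw [hst, step, dif_pos h]
    set m0 := Nat.find h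
    set k0 := ((Nat.find_spec h).2).choose
    have hspec := Nat.find_spec h
    have hk0 := ((Nat.find_spec h).2).choose_spec
    set N := modφ φ f k0 with hN
    set c := 2 ^ max N b * (2 * m0 + 1) - 1 with hc
    refine ⟨m0, k0, c, hspec.1, hk0.1, hk0.2, ⟨max N b, c_succ _ _⟩, ?_, ?_, ?_, ?_, ?_, ?_, ?_⟩
    · exact le_trans (le_max_left _ _) (c_ge _ _)
    · exact le_trans (le_max_right _ _) (c_ge _ _)
    · rw [hact]; rfl
    · rw [hact]; rfl
    · rw [hact]; show c + 1 ≤ max (max (b + 1) (c + 1)) (max N (s + 1)); omega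
    · rw [hact]; show N ≤ max (max (b + 1) (c + 1)) (max N (s + 1)); omega
    · intro m hm; exact Nat.find_min' h hm
  · left
    refine ⟨h, ?_, ?_⟩ <;> rw [hst, step, dif_neg h]

lemma b_succ (s : ℕ) :
    (st φ s).2.1 < (st φ (s + 1)).2.1 ∧ s + 1 ≤ (st φ (s + 1)).2.1 := by
  have hst : st φ (s + 1) = step φ s (st φ s) := rfl
  by_cases h : ∃ m, Elig φ (st φ s).1 (st φ s).2.2 m
  · rw [hst, step, dif_pos h]
    show (st φ s).2.1 < max (max _ _) (max _ (s + 1)) ∧ s + 1 ≤ max (max _ _) (max _ (s + 1))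
    omega
  · rw [hst, step, dif_neg h]
    show (st φ s).2.1 < max ((st φ s).2.1 + 1) (s + 1) ∧ s + 1 ≤ max ((st φ s).2.1 + 1) (s + 1)
    omega

lemma b_mono : Monotone fun s => (st φ s).2.1 :=
  monotone_nat_of_le_succ fun s => le_of_lt (b_succ φ s).1

lemma b_ge (s : ℕ) : s ≤ (st φ s).2.1 := by
  induction s with
  | zero => exact Nat.zero_le _
  | succ s _ => exact (b_succ φ s).2

lemma A_succ (s : ℕ) : (st φ s).2.2 ⊆ (st φ (s + 1)).2.2 := by
  rcases step_spec φ s with ⟨_, _, hA⟩ | ⟨m0, k0, c, h⟩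
  · rw [hA]
  · rw [h.2.2.2.2.2.2.2.1]; exact Set.subset_insert _ _

lemma A_mono {s t : ℕ} (hst : s ≤ t) : (st φ s).2.2 ⊆ (st φ t).2.2 := by
  induction t, hst using Nat.le_induction with
  | base => exact le_refl _
  | succ t hst ih => exact le_trans ih (A_succ φ t)

lemma f_stable_succ (s : ℕ) : ∀ i < (st φ s).2.1, (st φ (s + 1)).1 i = (st φ s).1 i := by
  intro i hi
  rcases step_spec φ s with ⟨_, hf, _⟩ | ⟨m0, k0, c, h⟩
  · rw [hf]
  · rw [h.2.2.2.2.2.2.1]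
    have hic : i ≠ c := by
      have := h.2.2.2.2.2.1
      omega
    exact Function.update_of_ne hic _ _

lemma f_stable {s t : ℕ} (hst : s ≤ t) : ∀ i < (st φ s).2.1, (st φ t).1 i = (st φ s).1 i := by
  induction t, hst using Nat.le_induction with
  | base => intro i _; rfl
  | succ t hst ih =>
    intro i hi
    have hi' : i < (st φ t).2.1 := lt_of_lt_of_le hi (b_mono φ hst)
    rw [f_stable_succ φ t i hi', ih i hi]

lemma α_eq (s : ℕ) {i : ℕ} (hi : i < (st φ s).2.1) : α φ i = (st φ s).1 i := by
  rcases le_total s (i + 1) with hle | hle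
  · exact f_stable φ hle i hi
  · have hi' : i < (st φ (i + 1)).2.1 := lt_of_lt_of_le (Nat.lt_succ_self i) (b_ge φ (i + 1))
    exact (f_stable φ hle i hi').symm

lemma α_eq' {s i : ℕ} (hi : i < s) : α φ i = (st φ s).1 i :=
  α_eq φ s (lt_of_lt_of_le hi (b_ge φ s))

lemma col_unique : ∀ a b x y : ℕ, 2 ^ a * (2 * x + 1) = 2 ^ b * (2 * y + 1) → x = y := by
  intro a
  induction a with
  | zero =>
    intro b x y h
    cases b with
    | zero => simp at h; omega
    | succ b =>
      exfalso
      have h2 : 2 ^ (b + 1) * (2 * y + 1) = 2 * (2 ^ b * (2 * y + 1)) := by ring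
      rw [pow_zero, one_mul, h2] at h
      omega
  | succ a ih =>
    intro b x y h
    cases b with
    | zero =>
      exfalso
      have h2 : 2 ^ (a + 1) * (2 * x + 1) = 2 * (2 ^ a * (2 * x + 1)) := by ring
      rw [pow_zero, one_mul, h2] at h
      omega
    | succ b =>
      apply ih b
      have h2 : 2 ^ (a + 1) * (2 * x + 1) = 2 * (2 ^ a * (2 * x + 1)) := by ring
      have h3 : 2 ^ (b + 1) * (2 * y + 1) = 2 * (2 ^ b * (2 * y + 1)) := by ring
      rw [h2, h3] at h
      omega

/-- If `m` is ever acted on, both `α` and `φ α` have nonzero values in column `m`. -/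
lemma acted_witness (hφ : Continuous φ) (s m : ℕ) (hm : m ∈ (st φ s).2.2) :
    (∃ k, (∃ n, k + 1 = 2 ^ n * (2 * m + 1)) ∧ α φ k ≠ 0) ∧
    (∃ k, (∃ n, k + 1 = 2 ^ n * (2 * m + 1)) ∧ φ (α φ) k ≠ 0) := by
  induction s with
  | zero => exact absurd hm (Set.notMem_empty m)
  | succ s ih =>
    rcases step_spec φ s with ⟨_, _, hA⟩ | ⟨m0, k0, c, hm0, hk0col, hk0phi, hccol, hNc, hbc,
        hf', hA', hcb', hNb', _⟩
    · rw [hA] at hm; exact ih hm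
    · rw [hA'] at hm
      rcases hm with hm | hm
      · subst hm
        constructor
        · refine ⟨c, hccol, ?_⟩
          have hcb : c < (st φ (s + 1)).2.1 := by omega
          rw [α_eq φ (s + 1) hcb, hf', Function.update_self]
          norm_num
        · refine ⟨k0, hk0col, ?_⟩
          have heq : φ (α φ) k0 = φ (st φ s).1 k0 := by
            apply modφ_spec φ hφ
            intro i hi
            have hib : i < (st φ (s + 1)).2.1 := lt_of_lt_of_le hi hNb'
            rw [α_eq φ (s + 1) hib, hf', Function.update_of_ne (by omega) 1 (st φ s).1]
          rw [heq]; exact hk0phi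
      · exact ih hm

/-- If `α` has a nonzero value in column `m`, `m` was acted on. -/
lemma nonzero_acted {k m n : ℕ} (hcol : k + 1 = 2 ^ n * (2 * m + 1)) (hα : α φ k ≠ 0) :
    ∃ s, m ∈ (st φ s).2.2 := by
  have key : ∀ t, (st φ t).1 k ≠ 0 → ∃ s, m ∈ (st φ s).2.2 := by
    intro t
    induction t with
    | zero => intro h; exact absurd rfl h
    | succ t ih =>
      intro h
      by_cases ht : (st φ t).1 k ≠ 0
      · exact ih ht
      · push_neg at ht
        rcases step_spec φ t with ⟨_, hf, _⟩ | ⟨m0, k0, c, hm0, hk0col, hk0phi, hccol, hNc, hbc,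
            hf', hA', hcb', hNb', _⟩
        · rw [hf] at h; exact absurd ht h
        · rw [hf'] at h
          have hkc : k = c := by
            by_contra hne
            rw [Function.update_of_ne hne] at h
            exact h ht
          subst hkc
          obtain ⟨n0, hn0⟩ := hccol
          have hmm0 : m = m0 := col_unique n n0 m m0 (by omega)
          subst hmm0
          exact ⟨t + 1, by rw [hA']; exact Set.mem_insert _ _⟩
  exact key (k + 1) (by exact hα)

/-- If `φ α` has a nonzero value in column `m`, `m` was acted on. -/
lemma phi_nonzero_acted (hφ : Continuous φ) {k m n : ℕ}
    (hcol : k + 1 = 2 ^ n * (2 * m + 1)) (h : φ (α φ) k ≠ 0) :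
    ∃ s, m ∈ (st φ s).2.2 := by
  set N := modφ φ (α φ) k with hN
  have key : ∀ s, N ≤ s → φ (st φ s).1 k = φ (α φ) k := by
    intro s hs
    apply modφ_spec φ hφ
    intro i hi
    exact (α_eq' φ (lt_of_lt_of_le hi hs)).symm
  by_contra hnot
  push_neg at hnot
  -- at every stage `s ≥ N`, m is eligible, so some m0 ≤ m gets acted
  have hstep : ∀ s, N ≤ s → ∃ m0, m0 ≤ m ∧ m0 ∉ (st φ s).2.2 ∧
      (st φ (s + 1)).2.2 = insert m0 (st φ s).2.2 := by
    intro s hs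
    have helig : Elig φ (st φ s).1 (st φ s).2.2 m := by
      refine ⟨fun hmem => hnot s hmem, k, ⟨n, hcol⟩, ?_⟩
      rw [key s hs]; exact h
    rcases step_spec φ s with ⟨hne, _, _⟩ | ⟨m0, k0, c, hm0, _, _, _, _, _, _, hA', _, _, hmin⟩
    · exact absurd ⟨m, helig⟩ hne
    · exact ⟨m0, hmin m helig, hm0, hA'⟩
  -- counting argument
  have hcard : ∀ t, t ≤ ((Finset.range (m + 1)).filter
      (fun j => j ∈ (st φ (N + t)).2.2)).card := by
    intro t
    induction t with
    | zero => exact Nat.zero_le _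
    | succ t ih =>
      obtain ⟨m0, hm0le, hm0not, hA'⟩ := hstep (N + t) (Nat.le_add_right _ _)
      have hsub : insert m0 ((Finset.range (m + 1)).filter
          (fun j => j ∈ (st φ (N + t)).2.2)) ⊆ (Finset.range (m + 1)).filter
          (fun j => j ∈ (st φ (N + t + 1)).2.2) := by
        intro j hj
        rcases Finset.mem_insert.mp hj with hj | hj
        · subst hj
          refine Finset.mem_filter.mpr ⟨Finset.mem_range.mpr (by omega), ?_⟩
          rw [hA']; exact Set.mem_insert _ _
        · obtain ⟨hj1, hj2⟩ := Finset.mem_filter.mp hj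
          exact Finset.mem_filter.mpr ⟨hj1, A_succ φ (N + t) hj2⟩
      have hm0nmem : m0 ∉ (Finset.range (m + 1)).filter
          (fun j => j ∈ (st φ (N + t)).2.2) := by
        intro hmem
        exact hm0not (Finset.mem_filter.mp hmem).2
      have h1 := Finset.card_le_card hsub
      rw [Finset.card_insert_of_notMem hm0nmem] at h1
      have : N + t + 1 = N + (t + 1) := by omega
      rw [this] at h1
      omega
  have h1 := hcard (m + 2)
  have h2 : ((Finset.range (m + 1)).filter
      (fun j => j ∈ (st φ (N + (m + 2))).2.2)).card ≤ m + 1 := by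
    calc _ ≤ (Finset.range (m + 1)).card := Finset.card_filter_le _ _
    _ = m + 1 := Finset.card_range _
  omega

end DFP

end

theorem diagonal_fixed_point (φ : (ℕ → ℕ) → (ℕ → ℕ)) (hφ : Continuous φ) :
    ∃ α : ℕ → ℕ,
      (∀ m : ℕ, (∃ n : ℕ, α (2 ^ n * (2 * m + 1) - 1) ≠ 0) ↔
        (∃ n : ℕ, φ α (2 ^ n * (2 * m + 1) - 1) ≠ 0)) ∧
      ((∀ m : ℕ, ∃ n : ℕ, α (2 ^ n * (2 * m + 1) - 1) ≠ 0) ↔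
        (∀ m : ℕ, ∃ n : ℕ, φ α (2 ^ n * (2 * m + 1) - 1) ≠ 0)) := by
  classical
  have key : ∀ m : ℕ, (∃ n : ℕ, DFP.α φ (2 ^ n * (2 * m + 1) - 1) ≠ 0) ↔
      (∃ n : ℕ, φ (DFP.α φ) (2 ^ n * (2 * m + 1) - 1) ≠ 0) := by
    intro m
    have hpos : ∀ n : ℕ, (2 ^ n * (2 * m + 1) - 1) + 1 = 2 ^ n * (2 * m + 1) :=
      fun n => DFP.c_succ n m
    constructor
    · rintro ⟨n, hn⟩
      obtain ⟨s, hs⟩ := DFP.nonzero_acted φ (hpos n) hn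
      obtain ⟨k, ⟨n', hn'⟩, hk⟩ := (DFP.acted_witness φ hφ s m hs).2
      exact ⟨n', by
        have : k = 2 ^ n' * (2 * m + 1) - 1 := by omega
        rwa [← this]⟩
    · rintro ⟨n, hn⟩
      obtain ⟨s, hs⟩ := DFP.phi_nonzero_acted φ hφ (hpos n) hn
      obtain ⟨k, ⟨n', hn'⟩, hk⟩ := (DFP.acted_witness φ hφ s m hs).1
      exact ⟨n', by
        have : k = 2 ^ n' * (2 * m + 1) - 1 := by omega
        rwa [← this]⟩
  exact ⟨DFP.α φ, key, forall_congr' key⟩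
end

section
/- Kleene's Alternative: there exists a decidable set B of finite binary sequences such that (1) every computable infinite binary sequence has an initial segment in B, and (2) for every finite list u(0), ..., u(p−1) of elements of B with p > 0, there exists a computable infinite binary sequence α such that no u(i) is an initial segment of α. -/
open Nat.Partrec Nat.Partrec.Code

namespace KleeneAux

def diag (n e : ℕ) : Option ℕ := evaln n (Denumerable.ofNat Code e) e

def g (s : List Bool) (e : ℕ) : Bool :=
  (diag s.length e).isSome &&
    (s.getD e false == ((diag s.length e).map fun v => decide (v = 1)).getD false)

def B : List Bool → Bool := fun s => (List.range s.length).any (g s)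

theorem any_eq_foldr (l : List ℕ) (p : ℕ → Bool) :
    l.any p = l.foldr (fun a b => p a || b) false := by
  induction l with
  | nil => rfl
  | cons a l ih => simp [List.any_cons, ih]

theorem diag_prim : Primrec₂ diag :=
  primrec_evaln.comp ((Primrec.fst.pair ((Primrec.ofNat Code).comp Primrec.snd)).pair Primrec.snd)

theorem g_prim : Primrec₂ g := by
  have h1 : Primrec₂ fun (s : List Bool) (e : ℕ) => diag s.length e :=
    diag_prim.comp (Primrec.list_length.comp Primrec.fst) Primrec.snd
  have h2 : Primrec₂ fun (s : List Bool) (e : ℕ) => s.getD e false :=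
    (Primrec.list_getD false).comp Primrec.fst Primrec.snd
  have h3 : Primrec₂ fun (s : List Bool) (e : ℕ) =>
      (((diag s.length e).map fun v => decide (v = 1)).getD false : Bool) :=
    Primrec.option_getD.comp
      (Primrec.option_map h1 ((Primrec.eq.comp Primrec.snd (Primrec.const 1)).decide :
        Primrec fun p : (List Bool × ℕ) × ℕ => decide (p.2 = 1)).to₂)
      (Primrec.const false)
  exact (Primrec.dom_bool₂ (· && ·)).comp₂
    ((Primrec.option_isSome.comp h1).to₂) (Primrec.beq.comp₂ h2 h3)

theorem B_prim : Primrec B := by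
  refine (Primrec.list_foldr (Primrec.list_range.comp Primrec.list_length) (Primrec.const false)
    ((Primrec.dom_bool₂ (· || ·)).comp
      (g_prim.comp Primrec.fst (Primrec.fst.comp Primrec.snd))
      (Primrec.snd.comp Primrec.snd)).to₂).of_eq fun s => ?_
  exact (any_eq_foldr (List.range s.length) (g s)).symm

theorem B_eq_true {s : List Bool} :
    B s = true ↔ ∃ e < s.length, ∃ v, diag s.length e = some v ∧
      s.getD e false = decide (v = 1) := by
  simp only [B, List.any_eq_true, List.mem_range]
  constructor
  · rintro ⟨e, he, h⟩
    refine ⟨e, he, ?_⟩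
    unfold g at h
    cases hd : diag s.length e with
    | none => rw [hd] at h; exact absurd h (by simp)
    | some v =>
      rw [hd] at h
      simp only [Option.isSome_some, Bool.true_and, Option.map_some, Option.getD_some,
        beq_iff_eq] at h
      exact ⟨v, rfl, h⟩
  · rintro ⟨e, he, v, hd, hv⟩
    refine ⟨e, he, ?_⟩
    unfold g
    rw [hd]
    simp only [Option.isSome_some, Bool.true_and, Option.map_some, Option.getD_some,
      beq_iff_eq]
    exact hv

/-- The "generic" string of length `n` avoiding the bar. -/
def t (n : ℕ) : List Bool :=
  List.ofFn fun e : Fin n => !(((diag n e).map fun v => decide (v = 1)).getD false)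

theorem t_length (n : ℕ) : (t n).length = n := by simp [t]

theorem getD_t {n e : ℕ} (he : e < n) :
    (t n).getD e false = !(((diag n e).map fun v => decide (v = 1)).getD false) := by
  rw [List.getD_eq_getElem?_getD, t, List.getElem?_ofFn]
  simp [List.ofFnNthVal, he]

theorem B_take_t {m n : ℕ} (hmn : m ≤ n) : B ((t n).take m) = false := by
  by_contra h
  rw [Bool.not_eq_false, B_eq_true] at h
  obtain ⟨e, he, v, hd, hv⟩ := h
  have hlen : ((t n).take m).length = m := by
    rw [List.length_take, t_length]; omega
  rw [hlen] at he
  rw [hlen] at hd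
  have hen : e < n := lt_of_lt_of_le he hmn
  have hd' : diag n e = some v := evaln_mono hmn hd
  have hget : ((t n).take m).getD e false = (t n).getD e false := by
    rw [List.getD_eq_getElem?_getD, List.getD_eq_getElem?_getD, List.getElem?_take_of_lt he]
  rw [hget, getD_t hen, hd'] at hv
  simp at hv

theorem le_foldr_max : ∀ (u : List (List Bool)) (s : List Bool), s ∈ u →
    s.length ≤ u.foldr (fun s m => max s.length m) 0 := by
  intro u
  induction u with
  | nil => simp
  | cons a l ih =>
    intro s hs
    rcases List.mem_cons.1 hs with rfl | h
    · exact le_max_left _ _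
    · exact le_trans (ih s h) (le_max_right _ _)

end KleeneAux

open KleeneAux in
theorem kleene_alternative :
    ∃ B : List Bool → Bool, Computable B ∧
      (∀ α : ℕ → Bool, Computable α →
        ∃ n : ℕ, B (List.ofFn fun i : Fin n => α i) = true) ∧
      (∀ u : List (List Bool), u ≠ [] → (∀ s ∈ u, B s = true) →
        ∃ α : ℕ → Bool, Computable α ∧
          ∀ s ∈ u, (List.ofFn fun i : Fin s.length => α i) ≠ s) := by
  refine ⟨B, B_prim.to_comp, ?_, ?_⟩
  · intro α hα
    have hfc : Computable fun n => cond (α n) 1 0 :=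
      Computable.cond hα (Computable.const 1) (Computable.const 0)
    have hpart : Nat.Partrec fun n => Part.some (cond (α n) 1 0) := Partrec.nat_iff.1 hfc
    obtain ⟨c, hc⟩ := exists_code.1 hpart
    have hce : Denumerable.ofNat Code (Encodable.encode c) = c := by simp
    have hmem : (cond (α (Encodable.encode c)) 1 0 : ℕ) ∈ eval c (Encodable.encode c) := by
      rw [hc]; exact Part.mem_some _
    obtain ⟨k, hk⟩ := evaln_complete.1 hmem
    set e : ℕ := Encodable.encode c with he
    refine ⟨max (e + 1) k, ?_⟩
    set n := max (e + 1) k with hn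
    rw [B_eq_true]
    have hslen : (List.ofFn fun i : Fin n => α i).length = n := by simp
    rw [hslen]
    have hen : e < n := lt_of_lt_of_le (Nat.lt_succ_self e) (le_max_left _ _)
    refine ⟨e, hen, cond (α e) 1 0, ?_, ?_⟩
    · unfold diag; rw [hce]
      exact evaln_mono (le_max_right _ _) hk
    · have hget : (List.ofFn fun i : Fin n => α i).getD e false = α e := by
        rw [List.getD_eq_getElem?_getD, List.getElem?_ofFn]
        simp [List.ofFnNthVal, hen]
      rw [hget]
      rcases hae : α e with _ | _ <;> simp [hae]
  · intro u hu hB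
    set n : ℕ := u.foldr (fun s m => max s.length m) 0 with hn
    refine ⟨fun i => (t n).getD i false, ?_, ?_⟩
    · exact ((Primrec.list_getD false).comp (Primrec.const (t n)) Primrec.id).to_comp
    · intro s hs habs
      have hsn : s.length ≤ n := le_foldr_max u s hs
      have heq : (List.ofFn fun i : Fin s.length => (t n).getD i false)
          = (t n).take s.length := by
        apply List.ext_getElem
        · simp [t_length, hsn]
        · intro i h1 h2
          simp only [List.getElem_ofFn]
          rw [List.getElem_take]
          simp only [List.length_ofFn] at h1
          rw [List.getD_eq_getElem?_getD, List.getElem?_eq_getElem (by rw [t_length]; omega)]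
          rfl
      rw [heq] at habs
      have hff := B_take_t hsn
      rw [habs, hB s hs] at hff
      exact absurd hff (by simp)
end
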